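/- Let K_1,...,K_m be entrywise nonnegative n×n matrices and α_1,...,α_m nonnegative reals with Σ α_j = 1. Then the numerical radius satisfies w(K_1^{(α_1)} ∘ ··· ∘ K_m^{(α_m)}) ≤ w(K_1)^{α_1} ··· w(K_m)^{α_m}. -/

import Mathlib

/-- The numerical radius of a real `n × n` matrix with respect to the standard inner
product: `w(K) = sup {|⟨Kf, f⟩| : ‖f‖₂ = 1}`. -/
noncomputable def numRad {n : ℕ} (A : Matrix (Fin n) (Fin n) ℝ) : ℝ :=
  sSup {x | ∃ f : EuclideanSpace ℝ (Fin n), ‖f‖ = 1 ∧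
    x = |(inner ℝ (Matrix.toEuclideanLin A f) f : ℝ)|}

theorem inner_toEucLin {n : ℕ} (A : Matrix (Fin n) (Fin n) ℝ) (f : EuclideanSpace ℝ (Fin n)) :
    (inner ℝ (Matrix.toEuclideanLin A f) f : ℝ) = ∑ x, ∑ y, A x y * f y * f x := by
  simp only [Matrix.toEuclideanLin_apply, PiLp.inner_apply, RCLike.inner_apply, conj_trivial,
    WithLp.ofLp_toLp, Matrix.mulVec, dotProduct,
    Finset.sum_mul]
  exact Finset.sum_congr rfl fun x _ => by rw [mul_comm, Finset.sum_mul]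

theorem coord_abs_le_norm {n : ℕ} (f : EuclideanSpace ℝ (Fin n)) (i : Fin n) : |f i| ≤ ‖f‖ := by
  rw [EuclideanSpace.norm_eq]
  have h1 : |f i| = Real.sqrt (‖f i‖ ^ 2) := by
    rw [Real.sqrt_sq_eq_abs, Real.norm_eq_abs, abs_abs]
  rw [h1]
  apply Real.sqrt_le_sqrt
  exact Finset.single_le_sum (fun j _ => sq_nonneg ‖f j‖) (Finset.mem_univ i)

theorem numRad_bddAbove {n : ℕ} (B : Matrix (Fin n) (Fin n) ℝ) :
    BddAbove {x | ∃ f : EuclideanSpace ℝ (Fin n), ‖f‖ = 1 ∧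
      x = |(inner ℝ (Matrix.toEuclideanLin B f) f : ℝ)|} := by
  refine ⟨∑ x, ∑ y, |B x y|, ?_⟩
  rintro _ ⟨f, hf, rfl⟩
  rw [inner_toEucLin]
  calc |∑ x, ∑ y, B x y * f y * f x| ≤ ∑ x, ∑ y, |B x y * f y * f x| := by
        apply (Finset.abs_sum_le_sum_abs _ _).trans
        apply Finset.sum_le_sum
        intro x _
        exact Finset.abs_sum_le_sum_abs _ _
    _ ≤ ∑ x, ∑ y, |B x y| := by
        apply Finset.sum_le_sum; intro x _; apply Finset.sum_le_sum; intro y _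
        rw [abs_mul, abs_mul]
        calc |B x y| * |f y| * |f x| ≤ |B x y| * 1 * 1 := by
              apply mul_le_mul
              · exact mul_le_mul_of_nonneg_left ((coord_abs_le_norm f y).trans_eq hf)
                  (abs_nonneg _)
              · exact (coord_abs_le_norm f x).trans_eq hf
              · exact abs_nonneg _
              · positivity
          _ = |B x y| := by ring

theorem inner_le_numRad {n : ℕ} (B : Matrix (Fin n) (Fin n) ℝ) (hB : ∀ x y, 0 ≤ B x y)
    (g : EuclideanSpace ℝ (Fin n)) (hg : ‖g‖ = 1) (hgpos : ∀ i, 0 ≤ g i) :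
    ∑ x, ∑ y, B x y * g y * g x ≤ numRad B := by
  apply le_csSup (numRad_bddAbove B)
  refine ⟨g, hg, ?_⟩
  rw [inner_toEucLin, abs_of_nonneg]
  apply Finset.sum_nonneg; intro x _; apply Finset.sum_nonneg; intro y _
  exact mul_nonneg (mul_nonneg (hB x y) (hgpos y)) (hgpos x)

theorem numRad_nonneg {n : ℕ} (B : Matrix (Fin n) (Fin n) ℝ) : 0 ≤ numRad B := by
  apply Real.sSup_nonneg
  rintro _ ⟨f, hf, rfl⟩
  exact abs_nonneg _

theorem holder_finset {ι κ : Type*} (s : Finset ι) (t : Finset κ) (a : κ → ι → ℝ) (w : κ → ℝ)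
    (ha : ∀ j ∈ t, ∀ i ∈ s, 0 ≤ a j i) (hw : ∀ j ∈ t, 0 ≤ w j) (hw' : ∑ j ∈ t, w j = 1) :
    ∑ i ∈ s, ∏ j ∈ t, a j i ^ w j ≤ ∏ j ∈ t, (∑ i ∈ s, a j i) ^ w j := by
  classical
  set t1 := t.filter (fun j => w j ≠ 0) with ht1
  have ht1sub : t1 ⊆ t := Finset.filter_subset _ _
  have hprod1 : ∀ b : κ → ℝ, ∏ j ∈ t, b j ^ w j = ∏ j ∈ t1, b j ^ w j := by
    intro b
    rw [← Finset.prod_filter_mul_prod_filter_not t (fun j => w j ≠ 0)]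
    have : ∏ j ∈ t.filter (fun j => ¬ w j ≠ 0), b j ^ w j = 1 := by
      apply Finset.prod_eq_one
      intro j hj
      rw [Finset.mem_filter] at hj
      rw [not_not.mp hj.2, Real.rpow_zero]
    rw [this, mul_one]
  have hsum1 : ∑ j ∈ t1, w j = 1 := by
    rw [← hw']
    symm
    rw [← Finset.sum_filter_add_sum_filter_not t (fun j => w j ≠ 0)]
    have : ∑ j ∈ t.filter (fun j => ¬ w j ≠ 0), w j = 0 :=
      Finset.sum_eq_zero fun j hj => not_not.mp (Finset.mem_filter.mp hj).2
    rw [this, add_zero]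
  simp only [hprod1]
  by_cases hzero : ∃ j ∈ t1, (∑ i ∈ s, a j i) = 0
  · obtain ⟨j, hj, hSj⟩ := hzero
    have haj : ∀ i ∈ s, a j i = 0 := by
      intro i hi
      exact (Finset.sum_eq_zero_iff_of_nonneg (fun i hi => ha j (ht1sub hj) i hi)).mp hSj i hi
    have hwj : w j ≠ 0 := (Finset.mem_filter.mp hj).2
    have hL : ∑ i ∈ s, ∏ j' ∈ t1, a j' i ^ w j' = 0 := by
      apply Finset.sum_eq_zero
      intro i hi
      apply Finset.prod_eq_zero hj
      rw [haj i hi, Real.zero_rpow hwj]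
    rw [hL]
    exact Finset.prod_nonneg fun j' hj' =>
      Real.rpow_nonneg (Finset.sum_nonneg fun i hi => ha j' (ht1sub hj') i hi) _
  · push_neg at hzero
    have hSpos : ∀ j ∈ t1, 0 < ∑ i ∈ s, a j i := fun j hj =>
      lt_of_le_of_ne (Finset.sum_nonneg fun i hi => ha j (ht1sub hj) i hi) (Ne.symm (hzero j hj))
    set S : κ → ℝ := fun j => ∑ i ∈ s, a j i with hS
    have key : ∀ i ∈ s, ∏ j ∈ t1, a j i ^ w j
        = (∏ j ∈ t1, S j ^ w j) * ∏ j ∈ t1, (a j i / S j) ^ w j := by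
      intro i hi
      rw [← Finset.prod_mul_distrib]
      apply Finset.prod_congr rfl
      intro j hj
      rw [← Real.mul_rpow (le_of_lt (hSpos j hj))
        (div_nonneg (ha j (ht1sub hj) i hi) (le_of_lt (hSpos j hj)))]
      rw [mul_div_cancel₀ _ (ne_of_gt (hSpos j hj))]
    calc ∑ i ∈ s, ∏ j ∈ t1, a j i ^ w j
        = (∏ j ∈ t1, S j ^ w j) * ∑ i ∈ s, ∏ j ∈ t1, (a j i / S j) ^ w j := by
          rw [Finset.mul_sum]; exact Finset.sum_congr rfl key
      _ ≤ (∏ j ∈ t1, S j ^ w j) * 1 := by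
          apply mul_le_mul_of_nonneg_left _ (Finset.prod_nonneg fun j hj =>
            Real.rpow_nonneg (le_of_lt (hSpos j hj)) _)
          calc ∑ i ∈ s, ∏ j ∈ t1, (a j i / S j) ^ w j
              ≤ ∑ i ∈ s, ∑ j ∈ t1, w j * (a j i / S j) := by
                apply Finset.sum_le_sum
                intro i hi
                exact Real.geom_mean_le_arith_mean_weighted t1 w _
                  (fun j hj => hw j (ht1sub hj)) hsum1
                  (fun j hj => div_nonneg (ha j (ht1sub hj) i hi) (le_of_lt (hSpos j hj)))
            _ = ∑ j ∈ t1, w j * ((∑ i ∈ s, a j i) / S j) := by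
                rw [Finset.sum_comm]
                apply Finset.sum_congr rfl
                intro j hj
                rw [← Finset.mul_sum, ← Finset.sum_div]
            _ = 1 := by
                rw [← hsum1]
                apply Finset.sum_congr rfl
                intro j hj
                rw [div_self (ne_of_gt (hSpos j hj)), mul_one]
      _ = ∏ j ∈ t1, S j ^ w j := mul_one _

/-- For nonnegative matrices `K j` and nonnegative weights `α j` summing to
`1`, the numerical radius satisfies
`w(K₁^{(α₁)} ∘ ⋯ ∘ K_m^{(α_m)}) ≤ w(K₁)^{α₁} ⋯ w(K_m)^{α_m}`. -/
theorem numRad_hadamard_geom_mean_le {n m : ℕ} (K : Fin m → Matrix (Fin n) (Fin n) ℝ)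
    (α : Fin m → ℝ) (hK : ∀ j x y, 0 ≤ K j x y) (hα : ∀ j, 0 ≤ α j)
    (hsum : ∑ j, α j = 1) :
    numRad (Matrix.of fun x y => ∏ j, (K j x y) ^ (α j)) ≤ ∏ j, numRad (K j) ^ (α j) := by
  set A : Matrix (Fin n) (Fin n) ℝ := Matrix.of fun x y => ∏ j, (K j x y) ^ (α j) with hA
  have hAentry : ∀ x y, A x y = ∏ j, (K j x y) ^ (α j) := fun x y => rfl
  have hAnn : ∀ x y, 0 ≤ A x y := fun x y => by
    rw [hAentry]
    exact Finset.prod_nonneg fun j _ => Real.rpow_nonneg (hK j x y) _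
  apply Real.sSup_le
  · rintro _ ⟨f, hf, rfl⟩
    set g : EuclideanSpace ℝ (Fin n) := (WithLp.equiv 2 (Fin n → ℝ)).symm (fun i => |f i|)
      with hgdef
    have hgapp : ∀ i, g i = |f i| := fun i => rfl
    have hgnonneg : ∀ i, 0 ≤ g i := fun i => by rw [hgapp]; exact abs_nonneg _
    have hgnorm : ‖g‖ = 1 := by
      rw [← hf, EuclideanSpace.norm_eq, EuclideanSpace.norm_eq]
      congr 1
      apply Finset.sum_congr rfl
      intro i _
      rw [hgapp, Real.norm_eq_abs, Real.norm_eq_abs, abs_abs]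
    rw [inner_toEucLin]
    calc |∑ x, ∑ y, A x y * f y * f x|
        ≤ ∑ x, ∑ y, A x y * g y * g x := by
          apply (Finset.abs_sum_le_sum_abs _ _).trans
          apply Finset.sum_le_sum; intro x _
          apply (Finset.abs_sum_le_sum_abs _ _).trans
          apply Finset.sum_le_sum; intro y _
          rw [abs_mul, abs_mul, abs_of_nonneg (hAnn x y), hgapp, hgapp]
      _ = ∑ p ∈ Finset.univ ×ˢ Finset.univ, A p.1 p.2 * g p.2 * g p.1 := by
          rw [Finset.sum_product]
      _ ≤ ∑ p ∈ Finset.univ ×ˢ Finset.univ, ∏ j, (K j p.1 p.2 * g p.2 * g p.1) ^ α j := by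
          apply Finset.sum_le_sum
          rintro ⟨x, y⟩ _
          simp only
          have hc0 : 0 ≤ g y * g x := mul_nonneg (hgnonneg y) (hgnonneg x)
          have hrw : ∀ j : Fin m, (K j x y * g y * g x) ^ α j
              = (K j x y) ^ α j * (g y * g x) ^ α j := by
            intro j
            rw [mul_assoc, Real.mul_rpow (hK j x y) hc0]
          simp only [hrw, Finset.prod_mul_distrib]
          rw [hAentry, mul_assoc]
          rcases eq_or_lt_of_le hc0 with hc | hc
          · rw [← hc, mul_zero]
            exact mul_nonneg (Finset.prod_nonneg fun j _ => Real.rpow_nonneg (hK j x y) _)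
              (Finset.prod_nonneg fun j _ => Real.rpow_nonneg le_rfl _)
          · have : ∏ j : Fin m, (g y * g x) ^ α j = g y * g x := by
              rw [← Real.rpow_sum_of_pos hc α Finset.univ, hsum, Real.rpow_one]
            rw [this]
      _ ≤ ∏ j, (∑ p ∈ Finset.univ ×ˢ Finset.univ, K j p.1 p.2 * g p.2 * g p.1) ^ α j := by
          apply holder_finset
          · rintro j _ ⟨x, y⟩ _
            exact mul_nonneg (mul_nonneg (hK j x y) (hgnonneg y)) (hgnonneg x)
          · exact fun j _ => hα j
          · exact hsum
      _ ≤ ∏ j, numRad (K j) ^ α j := by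
          apply Finset.prod_le_prod
          · intro j _
            apply Real.rpow_nonneg
            apply Finset.sum_nonneg
            rintro ⟨x, y⟩ _
            exact mul_nonneg (mul_nonneg (hK j x y) (hgnonneg y)) (hgnonneg x)
          · intro j _
            apply Real.rpow_le_rpow
            · apply Finset.sum_nonneg
              rintro ⟨x, y⟩ _
              exact mul_nonneg (mul_nonneg (hK j x y) (hgnonneg y)) (hgnonneg x)
            · rw [Finset.sum_product]
              exact inner_le_numRad (K j) (hK j) g hgnorm hgnonneg
            · exact hα j
  · exact Finset.prod_nonneg fun j _ => Real.rpow_nonneg (numRad_nonneg _) _
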